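/- Let φ be a white-noise random dynamical system on a complete separable metric space (E,d) with invariant probability measure ρ. If for every pair of points x,y ∈ E the distance d(φ_t(·,x), φ_t(·,y)) converges to 0 in probability as t → ∞, then φ is strongly mixing with respect to ρ, i.e., for every x ∈ E the law of φ_t(·,x) converges weakly to ρ as t → ∞. -/

import Mathlib

open MeasureTheory ProbabilityTheory Filter Topology
open scoped ENNReal

/-- A white-noise (filtered) random dynamical system on a metric space `E` over an ergodic
metric dynamical system `θ` on a probability space `(Ω, F, P)`. -/
structure WhiteNoiseRDS (Ω E : Type) [MeasurableSpace Ω] [MetricSpace E]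
    [MeasurableSpace E] [BorelSpace E] where
  /-- the underlying probability measure -/
  P : Measure Ω
  P_prob : IsProbabilityMeasure P
  /-- the metric dynamical system (group of shifts) -/
  θ : ℝ → Ω → Ω
  θ_meas : ∀ t, Measurable (θ t)
  θ_zero : ∀ ω, θ 0 ω = ω
  θ_add : ∀ s t : ℝ, ∀ ω, θ (s + t) ω = θ s (θ t ω)
  θ_preserves : ∀ t, MeasurePreserving (θ t) P P
  θ_ergodic : ∀ A : Set Ω, MeasurableSet A → (∀ t, θ t ⁻¹' A = A) → P A = 0 ∨ P A = 1
  /-- the cocycle -/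
  φ : ℝ → Ω → E → E
  φ_meas : Measurable fun p : ℝ × Ω × E => φ p.1 p.2.1 p.2.2
  φ_zero : ∀ ω x, φ 0 ω x = x
  φ_cocycle : ∀ s t : ℝ, 0 ≤ s → 0 ≤ t → ∀ ω x, φ (t + s) ω x = φ t (θ s ω) (φ s ω x)
  φ_cont : ∀ s : ℝ, 0 ≤ s → ∀ ω, Continuous fun x => φ s ω x
  /-- two-parameter filtration -/
  F : ℝ → ℝ → MeasurableSpace Ω
  F_le : ∀ s t : ℝ, F s t ≤ ‹MeasurableSpace Ω›
  F_mono : ∀ s t u v : ℝ, s ≤ t → t ≤ u → u ≤ v → F t u ≤ F s v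
  F_shift : ∀ r s t : ℝ, F (s + r) (t + r) = MeasurableSpace.comap (θ r) (F s t)
  F_indep : ∀ (n : ℕ) (ts : Fin (n + 1) → ℝ), Monotone ts →
    iIndep (fun i : Fin n => F (ts i.castSucc) (ts i.succ)) P
  φ_adapted : ∀ s : ℝ, 0 ≤ s → ∀ x : E, Measurable[F 0 s] fun ω => φ s ω x

namespace WhiteNoiseRDS

variable {Ω E : Type} [MeasurableSpace Ω] [MetricSpace E] [MeasurableSpace E] [BorelSpace E]

/-- `F_0`: the smallest σ-algebra containing all `F s 0`, `s ≤ 0`. -/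
def F0 (R : WhiteNoiseRDS Ω E) : MeasurableSpace Ω := ⨆ s ∈ Set.Iic (0 : ℝ), R.F s 0

/-- `ρ` is an invariant probability measure for the Markov semigroup associated to `φ`. -/
def Invariant (R : WhiteNoiseRDS Ω E) (ρ : Measure E) : Prop :=
  ∀ t : ℝ, 0 ≤ t → ∀ f : BoundedContinuousFunction E ℝ,
    ∫ x, (∫ ω, f (R.φ t ω x) ∂ R.P) ∂ρ = ∫ x, f x ∂ρ

/-- `φ` is strongly mixing w.r.t. `ρ`: the law of `φ_t(·,x)` converges weakly to `ρ`. -/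
def StronglyMixing (R : WhiteNoiseRDS Ω E) (ρ : Measure E) : Prop :=
  ∀ x : E, ∀ f : BoundedContinuousFunction E ℝ,
    Tendsto (fun t : ℝ => ∫ ω, f (R.φ t ω x) ∂ R.P) atTop (𝓝 (∫ y, f y ∂ρ))

/-- Weak global pointwise stability: there is a Borel set `U` of full `ρ`-measure and times
`t n ↑ ∞` such that any two points of `U` come `η`-close along `t n` with probability
bounded below by some `δ(x,y) > 0`. -/
def WeakGlobalPointwiseStability (R : WhiteNoiseRDS Ω E) (ρ : Measure E) : Prop :=
  ∃ U : Set E, MeasurableSet U ∧ ρ U = 1 ∧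
    ∃ t : ℕ → ℝ, StrictMono t ∧ Tendsto t atTop atTop ∧
      ∀ x ∈ U, ∀ y ∈ U, ∃ δ : ℝ≥0∞, 0 < δ ∧ ∀ η : ℝ, 0 < η →
        δ ≤ liminf (fun n => R.P {ω | dist (R.φ (t n) ω x) (R.φ (t n) ω y) ≤ η}) atTop

/-- Weak synchronization: there is an `F_0`-measurable random point `a` which is invariant
under the flow and attracts every deterministic point in probability (in the pullback sense). -/
def WeakSynchronization (R : WhiteNoiseRDS Ω E) : Prop :=
  ∃ a : Ω → E, Measurable[R.F0] a ∧
    (∀ t : ℝ, 0 ≤ t → ∀ᵐ ω ∂ R.P, R.φ t ω (a ω) = a (R.θ t ω)) ∧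
    ∀ x : E, ∀ ε : ℝ, 0 < ε →
      Tendsto (fun t : ℝ => R.P {ω | ε ≤ dist (R.φ t (R.θ (-t) ω) x) (a ω)}) atTop (𝓝 0)

end WhiteNoiseRDS
section Aux

variable {Ω E : Type} [MeasurableSpace Ω] [MetricSpace E] [MeasurableSpace E] [BorelSpace E]

lemma WhiteNoiseRDS.measurable_phi (R : WhiteNoiseRDS Ω E) (t : ℝ) (x : E) :
    Measurable fun ω => R.φ t ω x :=
  R.φ_meas.comp (measurable_const.prodMk (measurable_id.prodMk measurable_const))

lemma WhiteNoiseRDS.measurable_phi_joint (R : WhiteNoiseRDS Ω E) (t : ℝ) :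
    Measurable fun p : E × Ω => R.φ t p.2 p.1 :=
  R.φ_meas.comp (measurable_const.prodMk (measurable_snd.prodMk measurable_fst))

/-- Key analytic lemma: for uniformly continuous bounded test functions, the law of
`φ_t(·,x)` integrates to the right limit. -/
lemma WhiteNoiseRDS.tendsto_integral_of_uniformContinuous
    [TopologicalSpace.SeparableSpace E] (R : WhiteNoiseRDS Ω E)
    (ρ : Measure E) [IsProbabilityMeasure ρ] (hinv : R.Invariant ρ)
    (hconv : ∀ x y : E, ∀ ε : ℝ, 0 < ε →
      Tendsto (fun t : ℝ => R.P {ω | ε ≤ dist (R.φ t ω x) (R.φ t ω y)}) atTop (𝓝 0))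
    (x : E) (g : BoundedContinuousFunction E ℝ) (hg : UniformContinuous g) :
    Tendsto (fun t : ℝ => ∫ ω, g (R.φ t ω x) ∂ R.P) atTop (𝓝 (∫ y, g y ∂ρ)) := by
  haveI := R.P_prob
  haveI : SecondCountableTopology E := UniformSpace.secondCountable_of_separable E
  set C : ℝ := ‖g‖ with hCdef
  have hC : 0 ≤ C := norm_nonneg _
  have hgb : ∀ z, |g z| ≤ C := fun z => by
    simpa [Real.norm_eq_abs] using g.norm_coe_le_norm z
  rw [Metric.tendsto_nhds]
  intro ε hε
  obtain ⟨ε', hε', hucg⟩ := Metric.uniformContinuous_iff.mp hg (ε / 3) (by positivity)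
  -- the sets and the function H
  set S : ℝ → E → Set Ω := fun t y => {ω | ε' ≤ dist (R.φ t ω x) (R.φ t ω y)} with hSdef
  have measS : ∀ t y, MeasurableSet (S t y) := fun t y => by
    have : Measurable fun ω => dist (R.φ t ω x) (R.φ t ω y) :=
      (R.measurable_phi t x).dist (R.measurable_phi t y)
    exact this measurableSet_Ici
  set H : ℝ → E → ℝ := fun t y => (R.P (S t y)).toReal with hHdef
  have measH : ∀ t, Measurable (H t) := by
    intro t
    have hs : MeasurableSet {p : E × Ω | ε' ≤ dist (R.φ t p.2 x) (R.φ t p.2 p.1)} := by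
      have : Measurable fun p : E × Ω => dist (R.φ t p.2 x) (R.φ t p.2 p.1) :=
        ((R.measurable_phi t x).comp measurable_snd).dist (R.measurable_phi_joint t)
      exact this measurableSet_Ici
    exact (measurable_measure_prodMk_left hs).ennreal_toReal
  have H_nonneg : ∀ t y, 0 ≤ H t y := fun t y => ENNReal.toReal_nonneg
  have H_le_one : ∀ t y, H t y ≤ 1 := fun t y => by
    have h1 := prob_le_one (μ := R.P) (s := S t y)
    simpa using ENNReal.toReal_mono ENNReal.one_ne_top h1
  have intH : ∀ t, Integrable (H t) ρ := fun t =>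
    Integrable.mono' (integrable_const 1) (measH t).aestronglyMeasurable
      (Eventually.of_forall fun y => by
        rw [Real.norm_eq_abs, abs_of_nonneg (H_nonneg t y)]; exact H_le_one t y)
  -- dominated convergence for ∫ H t dρ → 0
  have hHtend : Tendsto (fun t : ℝ => ∫ y, H t y ∂ρ) atTop (𝓝 0) := by
    have := tendsto_integral_filter_of_dominated_convergence (μ := ρ)
      (F := fun t : ℝ => H t) (f := fun _ => (0 : ℝ)) (fun _ => (1 : ℝ))
      (Eventually.of_forall fun t => (measH t).aestronglyMeasurable)
      (Eventually.of_forall fun t => Eventually.of_forall fun y => by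
        rw [Real.norm_eq_abs, abs_of_nonneg (H_nonneg t y)]; exact H_le_one t y)
      (integrable_const 1)
      (Eventually.of_forall fun y => by
        have h0 := hconv x y ε' hε'
        have := (ENNReal.tendsto_toReal (a := 0) (by simp)).comp h0
        exact this)
    simpa using this
  have hden : (0 : ℝ) < 3 * (2 * C + 1) := by positivity
  have hev : ∀ᶠ t : ℝ in atTop, ∫ y, H t y ∂ρ < ε / (3 * (2 * C + 1)) :=
    hHtend.eventually_lt_const (by positivity)
  filter_upwards [hev, eventually_ge_atTop (0 : ℝ)] with t hHt ht0
  rw [Real.dist_eq]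
  -- integrability facts over P
  have int_g : ∀ z : E, Integrable (fun ω => g (R.φ t ω z)) R.P := fun z =>
    Integrable.mono' (integrable_const C)
      (g.continuous.measurable.comp (R.measurable_phi t z)).aestronglyMeasurable
      (Eventually.of_forall fun ω => by rw [Real.norm_eq_abs]; exact hgb _)
  set q : E → ℝ := fun y => ∫ ω, g (R.φ t ω y) ∂ R.P with hqdef
  have hq_meas : StronglyMeasurable q := by
    have : StronglyMeasurable fun p : E × Ω => g (R.φ t p.2 p.1) :=
      (g.continuous.measurable.comp (R.measurable_phi_joint t)).stronglyMeasurable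
    exact this.integral_prod_right'
  have hq_bdd : ∀ y, |q y| ≤ C := fun y => by
    rw [← Real.norm_eq_abs]
    calc ‖q y‖ ≤ C * (R.P Set.univ).toReal :=
      norm_integral_le_of_norm_le_const (Eventually.of_forall fun ω => by
        rw [Real.norm_eq_abs]; exact hgb _)
    _ = C := by simp
  have int_q : Integrable q ρ :=
    Integrable.mono' (integrable_const C) hq_meas.aestronglyMeasurable
      (Eventually.of_forall fun y => by rw [Real.norm_eq_abs]; exact hq_bdd y)
  have hinvg := hinv t ht0 g
  -- main estimate
  have key : |(∫ ω, g (R.φ t ω x) ∂ R.P) - ∫ y, g y ∂ρ| ≤ ε / 3 + (2 * C) * ∫ y, H t y ∂ρ := by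
    rw [← hinvg]
    have eq1 : (∫ ω, g (R.φ t ω x) ∂ R.P) - ∫ y, q y ∂ρ = ∫ y, (q x - q y) ∂ρ := by
      rw [integral_sub (integrable_const (q x)) int_q, integral_const]
      simp
      rfl
    rw [show (∫ y, (∫ ω, g (R.φ t ω y) ∂ R.P) ∂ρ) = ∫ y, q y ∂ρ from rfl, eq1]
    have ptwise : ∀ y : E, |q x - q y| ≤ ε / 3 + (2 * C) * H t y := by
      intro y
      have hsub : q x - q y = ∫ ω, (g (R.φ t ω x) - g (R.φ t ω y)) ∂ R.P :=
        (integral_sub (int_g x) (int_g y)).symm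
      have step1 : |q x - q y| ≤ ∫ ω, |g (R.φ t ω x) - g (R.φ t ω y)| ∂ R.P := by
        rw [hsub, ← Real.norm_eq_abs]
        exact (norm_integral_le_integral_norm _).trans (by simp [Real.norm_eq_abs])
      have int_abs : Integrable (fun ω => |g (R.φ t ω x) - g (R.φ t ω y)|) R.P :=
        ((int_g x).sub (int_g y)).abs
      have int_rhs : Integrable
          (fun ω => ε / 3 + (S t y).indicator (fun _ => 2 * C) ω) R.P :=
        (integrable_const _).add ((integrable_const (2 * C)).indicator (measS t y))
      have step2 : (∫ ω, |g (R.φ t ω x) - g (R.φ t ω y)| ∂ R.P)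
          ≤ ∫ ω, (ε / 3 + (S t y).indicator (fun _ => 2 * C) ω) ∂ R.P := by
        apply integral_mono int_abs int_rhs
        intro ω
        by_cases hω : ω ∈ S t y
        · have h2 : |g (R.φ t ω x) - g (R.φ t ω y)| ≤ 2 * C := by
            calc |g (R.φ t ω x) - g (R.φ t ω y)|
                ≤ |g (R.φ t ω x)| + |g (R.φ t ω y)| := abs_sub _ _
              _ ≤ C + C := add_le_add (hgb _) (hgb _)
              _ = 2 * C := by ring
          simp only [Set.indicator_of_mem hω]
          linarith [hε.le]
        · have hd : dist (R.φ t ω x) (R.φ t ω y) < ε' := by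
            simpa [hSdef] using not_le.mp hω
          have := hucg hd
          rw [Real.dist_eq] at this
          simp only [Set.indicator_of_notMem hω]
          linarith
      have step3 : (∫ ω, (ε / 3 + (S t y).indicator (fun _ => 2 * C) ω) ∂ R.P)
          = ε / 3 + (2 * C) * H t y := by
        rw [integral_add (integrable_const _) ((integrable_const (2 * C)).indicator (measS t y)),
          integral_const, integral_indicator_const _ (measS t y)]
        simp [hHdef, mul_comm, measureReal_def]
      exact step1.trans (step2.trans_eq step3)
    have int_lhs : Integrable (fun y => q x - q y) ρ := (integrable_const (q x)).sub int_q
    calc |∫ y, (q x - q y) ∂ρ| ≤ ∫ y, |q x - q y| ∂ρ := by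
          rw [← Real.norm_eq_abs]
          exact (norm_integral_le_integral_norm _).trans (by simp [Real.norm_eq_abs])
      _ ≤ ∫ y, (ε / 3 + (2 * C) * H t y) ∂ρ := by
          apply integral_mono int_lhs.abs
            ((integrable_const _).add ((intH t).const_mul (2 * C))) ptwise
      _ = ε / 3 + (2 * C) * ∫ y, H t y ∂ρ := by
          rw [integral_add (integrable_const _) ((intH t).const_mul (2 * C)),
            integral_const, integral_const_mul]
          simp
  -- finish
  have hfin : ε / 3 + (2 * C) * ∫ y, H t y ∂ρ < ε := by
    have hBpos : 0 < ε / (3 * (2 * C + 1)) := by positivity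
    have hBe : (ε / (3 * (2 * C + 1))) * (3 * (2 * C + 1)) = ε :=
      div_mul_cancel₀ _ hden.ne'
    have h2 : (2 * C) * ∫ y, H t y ∂ρ ≤ (2 * C) * (ε / (3 * (2 * C + 1))) :=
      mul_le_mul_of_nonneg_left hHt.le (by positivity)
    nlinarith [h2, hBe, hBpos, hC]
  exact lt_of_le_of_lt key hfin

end Aux

/-- **Lemma.** If a white-noise RDS on a complete separable metric space has an invariant
probability measure `ρ` and the distance of any two trajectories converges to `0` in
probability, then `φ` is strongly mixing w.r.t. `ρ`: the law of `φ_t(·,x)` converges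
weakly to `ρ` for every `x`. -/
theorem stronglyMixing_of_pairwise_convergence
    {Ω E : Type} [MeasurableSpace Ω] [MetricSpace E] [CompleteSpace E]
    [TopologicalSpace.SeparableSpace E] [MeasurableSpace E] [BorelSpace E]
    (R : WhiteNoiseRDS Ω E) (ρ : MeasureTheory.Measure E) [MeasureTheory.IsProbabilityMeasure ρ]
    (hinv : R.Invariant ρ)
    (hconv : ∀ x y : E, ∀ ε : ℝ, 0 < ε →
      Filter.Tendsto (fun t : ℝ => R.P {ω | ε ≤ dist (R.φ t ω x) (R.φ t ω y)})
        Filter.atTop (nhds 0)) :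
    R.StronglyMixing ρ := by
  haveI := R.P_prob
  intro x f
  rw [Filter.tendsto_iff_seq_tendsto]
  intro u hu
  haveI hmap : ∀ n : ℕ, IsProbabilityMeasure (R.P.map fun ω => R.φ (u n) ω x) := fun n =>
    Measure.isProbabilityMeasure_map (R.measurable_phi _ _).aemeasurable
  set ν : ℕ → ProbabilityMeasure E := fun n => ⟨R.P.map fun ω => R.φ (u n) ω x, hmap n⟩ with hν
  set ρ' : ProbabilityMeasure E := ⟨ρ, ‹_›⟩ with hρ'
  have hint_eq : ∀ (h : BoundedContinuousFunction E ℝ) (n : ℕ),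
      ∫ z, h z ∂(ν n : Measure E) = ∫ ω, h (R.φ (u n) ω x) ∂ R.P := fun h n =>
    integral_map (R.measurable_phi _ _).aemeasurable h.continuous.measurable.aestronglyMeasurable
  have huc : ∀ g : BoundedContinuousFunction E ℝ, UniformContinuous g →
      Tendsto (fun n => ∫ z, g z ∂(ν n : Measure E)) atTop (𝓝 (∫ z, g z ∂ρ)) := by
    intro g hg
    have h1 := (R.tendsto_integral_of_uniformContinuous ρ hinv hconv x g hg).comp hu
    exact h1.congr fun n => (hint_eq g n).symm
  -- open set liminf condition (in ℝ≥0∞)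
  have h_opens : ∀ G : Set E, IsOpen G →
      ρ G ≤ atTop.liminf fun n => (ν n : Measure E) G := by
    intro G hG
    rcases Set.eq_empty_or_nonempty Gᶜ with hGc | hGc
    · have hGuniv : G = Set.univ := Set.compl_empty_iff.mp hGc
      subst hGuniv
      have : ∀ n, (ν n : Measure E) Set.univ = 1 := fun n => measure_univ
      simp only [this, Filter.liminf_const]
      simp
    -- the approximating Lipschitz functions
    · set g : ℕ → E → ℝ := fun m z => min (((m : ℝ) + 1) * Metric.infDist z Gᶜ) 1 with hgdef
      have g_nonneg : ∀ m z, 0 ≤ g m z :=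
        fun m z => le_min (mul_nonneg (by positivity) Metric.infDist_nonneg) zero_le_one
      have g_le_one : ∀ m z, g m z ≤ 1 := fun m z => min_le_right _ _
      have g_lip : ∀ m : ℕ, LipschitzWith ((m : NNReal) + 1) (g m) := by
        intro m
        apply LipschitzWith.min_const
        apply LipschitzWith.of_dist_le_mul
        intro a b
        have hinf := (Metric.lipschitz_infDist_pt Gᶜ).dist_le_mul a b
        rw [Real.dist_eq, ← mul_sub, abs_mul, abs_of_nonneg (by positivity : (0:ℝ) ≤ (m:ℝ)+1)]
        rw [Real.dist_eq] at hinf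
        calc ((m:ℝ)+1) * |Metric.infDist a Gᶜ - Metric.infDist b Gᶜ|
            ≤ ((m:ℝ)+1) * dist a b := by
              apply mul_le_mul_of_nonneg_left _ (by positivity)
              simpa using hinf
          _ = (((m : NNReal) + 1) : ℝ) * dist a b := by push_cast; ring
      have g_cont : ∀ m, Continuous (g m) := fun m => (g_lip m).continuous
      have g_uc : ∀ m, UniformContinuous (g m) := fun m => (g_lip m).uniformContinuous
      set gb : ℕ → BoundedContinuousFunction E ℝ := fun m =>
        BoundedContinuousFunction.ofNormedAddCommGroup (g m) (g_cont m) 1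
          (fun z => by
            rw [Real.norm_eq_abs, abs_of_nonneg (g_nonneg m z)]; exact g_le_one m z) with hgb
      have gb_coe : ∀ m z, gb m z = g m z := fun m z => rfl
      have int_g : ∀ (m : ℕ) (ν' : Measure E) [IsProbabilityMeasure ν'], Integrable (g m) ν' := by
        intro m ν' _
        exact Integrable.mono' (integrable_const 1) (g_cont m).aestronglyMeasurable
          (Eventually.of_forall fun z => by
            rw [Real.norm_eq_abs, abs_of_nonneg (g_nonneg m z)]; exact g_le_one m z)
      have conv : ∀ (m : ℕ) (ν' : Measure E) [IsProbabilityMeasure ν'],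
          ENNReal.ofReal (∫ z, g m z ∂ν') = ∫⁻ z, ENNReal.ofReal (g m z) ∂ν' := by
        intro m ν' _
        exact ofReal_integral_eq_lintegral_ofReal (int_g m ν')
          (Eventually.of_forall (g_nonneg m))
      -- (i) lintegral below the measure of G
      have gle_ind : ∀ (m : ℕ) (ν' : Measure E) [IsProbabilityMeasure ν'],
          (∫⁻ z, ENNReal.ofReal (g m z) ∂ν') ≤ ν' G := by
        intro m ν' _
        have hle : ∀ z, ENNReal.ofReal (g m z) ≤ G.indicator (fun _ => (1 : ℝ≥0∞)) z := by
          intro z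
          by_cases hz : z ∈ G
          · rw [Set.indicator_of_mem hz]
            exact le_trans (ENNReal.ofReal_le_ofReal (g_le_one m z)) (by simp)
          · have h0 : Metric.infDist z Gᶜ = 0 :=
              Metric.infDist_zero_of_mem (by simpa using hz)
            rw [Set.indicator_of_notMem hz]
            simp [hgdef, h0]
        calc (∫⁻ z, ENNReal.ofReal (g m z) ∂ν')
            ≤ ∫⁻ z, G.indicator (fun _ => (1 : ℝ≥0∞)) z ∂ν' := lintegral_mono hle
          _ = ν' G := by rw [lintegral_indicator hG.measurableSet]; simp
      -- (ii) convergence of the lintegrals along ν n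
      have hlim2 : ∀ m : ℕ, Tendsto (fun n => ∫⁻ z, ENNReal.ofReal (g m z) ∂(ν n : Measure E))
          atTop (𝓝 (∫⁻ z, ENNReal.ofReal (g m z) ∂ρ)) := by
        intro m
        have hre := huc (gb m) (g_uc m)
        have hre' : Tendsto (fun n => ∫ z, g m z ∂(ν n : Measure E)) atTop
            (𝓝 (∫ z, g m z ∂ρ)) := hre
        have h2 := ENNReal.tendsto_ofReal hre'
        rw [conv m ρ] at h2
        exact h2.congr fun n => conv m _
      have hstep : ∀ m : ℕ, (∫⁻ z, ENNReal.ofReal (g m z) ∂ρ)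
          ≤ atTop.liminf fun n => (ν n : Measure E) G := by
        intro m
        rw [← (hlim2 m).liminf_eq]
        exact Filter.liminf_le_liminf (Eventually.of_forall fun n => gle_ind m _)
      -- (iii) the lintegrals over ρ converge to ρ G
      have hlim3 : Tendsto (fun m => ∫⁻ z, ENNReal.ofReal (g m z) ∂ρ) atTop (𝓝 (ρ G)) := by
        have hdc : Tendsto (fun m => ∫⁻ z, ENNReal.ofReal (g m z) ∂ρ) atTop
            (𝓝 (∫⁻ z, G.indicator (fun _ => (1 : ℝ≥0∞)) z ∂ρ)) := by
          apply tendsto_lintegral_of_dominated_convergence (bound := fun _ => (1 : ℝ≥0∞))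
          · exact fun m => (g_cont m).measurable.ennreal_ofReal
          · exact fun m => Eventually.of_forall fun z =>
              ENNReal.ofReal_le_one.mpr (g_le_one m z)
          · simp
          · apply Eventually.of_forall
            intro z
            by_cases hz : z ∈ G
            · have hd : 0 < Metric.infDist z Gᶜ :=
                (IsClosed.notMem_iff_infDist_pos hG.isClosed_compl hGc).mp (by simpa using hz)
              obtain ⟨M, hM⟩ := exists_nat_ge (1 / Metric.infDist z Gᶜ)
              have hev : ∀ᶠ m : ℕ in atTop,
                  ENNReal.ofReal (g m z) = G.indicator (fun _ => (1 : ℝ≥0∞)) z := by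
                filter_upwards [eventually_ge_atTop M] with m hm
                have h1 : (1 : ℝ) ≤ ((m : ℝ) + 1) * Metric.infDist z Gᶜ := by
                  have hMm : 1 / Metric.infDist z Gᶜ ≤ (m : ℝ) :=
                    le_trans hM (by exact_mod_cast hm)
                  rw [div_le_iff₀ hd] at hMm
                  nlinarith [hd]
                rw [Set.indicator_of_mem hz]
                simp [hgdef, min_eq_right h1]
              exact Filter.Tendsto.congr' (hev.mono fun _ h => h.symm) tendsto_const_nhds
            · have h0 : Metric.infDist z Gᶜ = 0 :=
                Metric.infDist_zero_of_mem (by simpa using hz)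
              have : ∀ m : ℕ, ENNReal.ofReal (g m z) = G.indicator (fun _ => (1 : ℝ≥0∞)) z := by
                intro m
                rw [Set.indicator_of_notMem hz]
                simp [hgdef, h0]
              simp only [this]
              exact tendsto_const_nhds
        rwa [lintegral_indicator hG.measurableSet, setLIntegral_one] at hdc
      exact le_of_tendsto hlim3 (Eventually.of_forall hstep)
  -- weak convergence of the sequence of laws
  have key : Tendsto ν atTop (𝓝 ρ') := by
    apply MeasureTheory.tendsto_of_forall_isOpen_le_liminf
    intro G hG
    have hG2 := h_opens G hG
    have aux : (ENNReal.ofNNReal (atTop.liminf fun n => ν n G)) =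
        atTop.liminf (ENNReal.ofNNReal ∘ fun n => ν n G) := by
      refine Monotone.map_liminf_of_continuousAt (F := atTop) ENNReal.coe_mono (fun n => ν n G)
        ENNReal.continuous_coe.continuousAt ?_ ?_
      · exact Filter.IsBoundedUnder.isCoboundedUnder_ge ⟨1, Filter.eventually_map.mpr
          (Eventually.of_forall fun n => by exact_mod_cast (ν n).apply_le_one G)⟩
      · exact ⟨0, Filter.eventually_map.mpr (Eventually.of_forall fun n => zero_le)⟩
    rw [← ENNReal.coe_le_coe, aux]
    have hcomp : (ENNReal.ofNNReal ∘ fun n => ν n G) = fun n => (ν n : Measure E) G :=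
      funext fun n => ProbabilityMeasure.ennreal_coeFn_eq_coeFn_toMeasure (ν n) G
    rw [hcomp, ProbabilityMeasure.ennreal_coeFn_eq_coeFn_toMeasure]
    exact hG2
  have hfin := ProbabilityMeasure.tendsto_iff_forall_integral_tendsto.mp key f
  have heq : (fun n => ∫ z, f z ∂(ν n : Measure E)) = fun n => ∫ ω, f (R.φ (u n) ω x) ∂ R.P :=
    funext fun n => hint_eq f n
  rw [heq] at hfin
  exact hfin
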